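/- Let p be a trigonometric polynomial of degree at most 2 with p(θ) ≥ 0 for all θ and p(0) = 0. Then there exist constants c ≥ 0, φ ∈ [0, 2π), and s with 0 ≤ s ≤ 1 such that p(θ) = c(1 - cos θ)(1 - s·cos(θ - φ)) for all θ. -/

import Mathlib

open Real

/-- If `p` is a trigonometric polynomial of degree at most 2 with `p(θ) ≥ 0` for all `θ`
and `p(0) = 0`, then `p(θ) = c (1 - cos θ)(1 - s cos(θ - φ))` for some `c ≥ 0`,
`φ ∈ [0, 2π)` and `s ∈ [0,1]`. -/
theorem stmt4 (p : ℝ → ℝ)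
    (hp : ∃ c0 c1 s1 c2 s2 : ℝ, ∀ θ : ℝ,
      p θ = c0 + c1 * Real.cos θ + s1 * Real.sin θ
        + c2 * Real.cos (2 * θ) + s2 * Real.sin (2 * θ))
    (hnn : ∀ θ : ℝ, 0 ≤ p θ) (h0 : p 0 = 0) :
    ∃ c : ℝ, 0 ≤ c ∧ ∃ φ ∈ Set.Ico (0 : ℝ) (2 * Real.pi), ∃ s ∈ Set.Icc (0 : ℝ) 1,
      ∀ θ : ℝ, p θ = c * (1 - Real.cos θ) * (1 - s * Real.cos (θ - φ)) := by
  obtain ⟨c0, c1, s1, c2, s2, hp⟩ := hp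
  -- value at 0
  have hc0 : c0 = -c1 - c2 := by
    have h := hp 0
    rw [h0] at h
    simp at h
    linarith
  -- derivative of p at 0 is zero
  have hder : HasDerivAt p (s1 + 2 * s2) 0 := by
    have hcos2 : HasDerivAt (fun θ : ℝ => Real.cos (2 * θ))
        (-Real.sin (2 * (0:ℝ)) * 2) 0 := by
      exact (Real.hasDerivAt_cos (2 * (0:ℝ))).comp 0
        (by simpa using (hasDerivAt_id (0:ℝ)).const_mul (2:ℝ))
    have hsin2 : HasDerivAt (fun θ : ℝ => Real.sin (2 * θ))
        (Real.cos (2 * (0:ℝ)) * 2) 0 := by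
      exact (Real.hasDerivAt_sin (2 * (0:ℝ))).comp 0
        (by simpa using (hasDerivAt_id (0:ℝ)).const_mul (2:ℝ))
    have h1 : HasDerivAt (fun θ : ℝ => c0 + c1 * Real.cos θ + s1 * Real.sin θ
        + c2 * Real.cos (2 * θ) + s2 * Real.sin (2 * θ))
        (0 + c1 * (-Real.sin 0) + s1 * Real.cos 0 + c2 * (-Real.sin (2 * (0:ℝ)) * 2)
          + s2 * (Real.cos (2 * (0:ℝ)) * 2)) 0 := by
      exact ((((hasDerivAt_const (0:ℝ) c0).add
        ((Real.hasDerivAt_cos 0).const_mul c1)).add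
        ((Real.hasDerivAt_sin 0).const_mul s1)).add
        (hcos2.const_mul c2)).add (hsin2.const_mul s2)
    have hpeq : p = fun θ : ℝ => c0 + c1 * Real.cos θ + s1 * Real.sin θ
        + c2 * Real.cos (2 * θ) + s2 * Real.sin (2 * θ) := funext hp
    rw [hpeq]
    convert h1 using 1
    simp
    ring
  have hk : s1 + 2 * s2 = 0 := by
    have hmin : IsLocalMin p 0 :=
      Filter.Eventually.of_forall (fun θ => by rw [h0]; exact hnn θ)
    exact hmin.hasDerivAt_eq_zero hder
  -- factor out (1 - cos θ)
  have key : ∀ θ : ℝ, p θ = (1 - Real.cos θ) *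
      ((-c1 - 2 * c2) - 2 * c2 * Real.cos θ - 2 * s2 * Real.sin θ) := by
    intro θ
    have hs1 : s1 = -(2 * s2) := by linarith
    rw [hp θ, hc0, hs1, Real.cos_two_mul, Real.sin_two_mul]
    ring
  set c : ℝ := -c1 - 2 * c2 with hc_def
  -- q ≥ 0 away from cos = 1
  have hq0 : ∀ θ : ℝ, Real.cos θ ≠ 1 →
      0 ≤ c - 2 * c2 * Real.cos θ - 2 * s2 * Real.sin θ := by
    intro θ hθ
    have h1 : Real.cos θ < 1 := lt_of_le_of_ne (Real.cos_le_one θ) hθ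
    have h2 := hnn θ
    rw [key θ] at h2
    nlinarith
  have hsmall : ∀ n : ℕ, Real.cos (1 / ((n:ℝ) + 1)) ≠ 1 := by
    intro n hcontra
    rw [Real.cos_eq_one_iff] at hcontra
    obtain ⟨m, hm⟩ := hcontra
    have hx : (0:ℝ) < 1 / ((n:ℝ) + 1) := by positivity
    have hx1 : (1:ℝ) / ((n:ℝ) + 1) ≤ 1 := by
      rw [div_le_one (by positivity)]; linarith [Nat.cast_nonneg (α := ℝ) n]
    rcases le_or_gt (m:ℝ) 0 with hm0 | hm0
    · nlinarith [Real.pi_gt_three]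
    · have : (1:ℝ) ≤ (m:ℝ) := by exact_mod_cast hm0
      nlinarith [Real.pi_gt_three]
  -- q ≥ 0 everywhere
  have hq : ∀ θ : ℝ, 0 ≤ c - 2 * c2 * Real.cos θ - 2 * s2 * Real.sin θ := by
    intro θ
    by_cases hθ : Real.cos θ = 1
    · have hsin : Real.sin θ = 0 := by nlinarith [Real.sin_sq_add_cos_sq θ]
      have hlim : Filter.Tendsto
          (fun n : ℕ => c - 2 * c2 * Real.cos (θ + 1 / ((n:ℝ) + 1))
            - 2 * s2 * Real.sin (θ + 1 / ((n:ℝ) + 1))) Filter.atTop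
          (nhds (c - 2 * c2 * Real.cos θ - 2 * s2 * Real.sin θ)) := by
        have ht : Filter.Tendsto (fun n : ℕ => θ + 1 / ((n:ℝ) + 1)) Filter.atTop
            (nhds θ) := by
          simpa using tendsto_one_div_add_atTop_nhds_zero_nat.const_add θ
        have hcont : Continuous (fun x : ℝ => c - 2 * c2 * Real.cos x
            - 2 * s2 * Real.sin x) := by fun_prop
        exact (hcont.tendsto θ).comp ht
      refine ge_of_tendsto hlim ?_
      filter_upwards with n
      apply hq0
      rw [Real.cos_add, hθ, hsin]
      simpa using hsmall n
    · exact hq0 θ hθ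
  by_cases hz : c2 = 0 ∧ s2 = 0
  · -- degenerate case
    obtain ⟨hz1, hz2⟩ := hz
    have hc : 0 ≤ c := by have := hq 0; simp [hz1, hz2] at this; linarith
    refine ⟨c, hc, 0, ⟨le_refl 0, by positivity⟩, 0, ⟨le_refl 0, zero_le_one⟩, ?_⟩
    intro θ
    rw [key θ, hz1, hz2]
    ring
  · -- main case
    set z : ℂ := ⟨2 * c2, 2 * s2⟩ with hz_def
    have hzne : z ≠ 0 := by
      intro h
      apply hz
      have h1 : 2 * c2 = 0 := by simpa [hz_def] using congrArg Complex.re h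
      have h2 : 2 * s2 = 0 := by simpa [hz_def] using congrArg Complex.im h
      exact ⟨by linarith, by linarith⟩
    set R : ℝ := ‖z‖ with hR_def
    have hRpos : 0 < R := by
      have := norm_pos_iff.mpr hzne
      exact this
    have hRsq : R ^ 2 = (2 * c2) ^ 2 + (2 * s2) ^ 2 := by
      rw [hR_def, Complex.sq_norm, hz_def, Complex.normSq_mk]; ring
    have hcosφ0 : Real.cos z.arg = (2 * c2) / R := by
      rw [Complex.cos_arg hzne]
    have hsinφ0 : Real.sin z.arg = (2 * s2) / R := by
      rw [Complex.sin_arg]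
    have hcR : R ≤ c := by
      have h := hq z.arg
      rw [hcosφ0, hsinφ0] at h
      have hid : 2 * c2 * ((2 * c2) / R) + 2 * s2 * ((2 * s2) / R) = R := by
        field_simp
        nlinarith [hRsq]
      linarith
    have hcpos : 0 < c := lt_of_lt_of_le hRpos hcR
    set sv : ℝ := R / c with hsv_def
    set φ : ℝ := if z.arg < 0 then z.arg + 2 * π else z.arg with hφ_def
    have hφcos : Real.cos φ = Real.cos z.arg := by
      rw [hφ_def]; split_ifs with h
      · rw [Real.cos_add_two_pi]
      · rfl
    have hφsin : Real.sin φ = Real.sin z.arg := by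
      rw [hφ_def]; split_ifs with h
      · rw [Real.sin_add_two_pi]
      · rfl
    have hφmem : φ ∈ Set.Ico (0:ℝ) (2 * π) := by
      rw [hφ_def]
      have h1 := Complex.neg_pi_lt_arg z
      have h2 := Complex.arg_le_pi z
      have hπ := Real.pi_pos
      split_ifs with h
      · constructor <;> [linarith; linarith]
      · constructor <;> [linarith; linarith]
    refine ⟨c, le_of_lt hcpos, φ, hφmem, sv, ⟨by positivity, ?_⟩, ?_⟩
    · rw [hsv_def, div_le_one hcpos]; exact hcR
    · intro θ
      have e1 : c * sv * Real.cos φ = 2 * c2 := by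
        rw [hφcos, hcosφ0, hsv_def]
        field_simp
      have e2 : c * sv * Real.sin φ = 2 * s2 := by
        rw [hφsin, hsinφ0, hsv_def]
        field_simp
      rw [key θ, Real.cos_sub]
      linear_combination ((1 - Real.cos θ) * Real.cos θ) * e1
        + ((1 - Real.cos θ) * Real.sin θ) * e2
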